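/- Assume that Ω^1_{R/K} is a free R-module with basis dx^1,…,dx^d for elements x^1,…,x^d ∈ R. Let y^1,…,y^d ∈ R and let Λ = (Λ^a_b) be the d×d matrix over R determined by dy^a = Σ_b Λ^a_b dx^b. Then in R^𝐝: (i) y^a_{(b)} = Σ_c Λ^a_c · x^c_{(b)} for all a, b, where Λ^a_c acts through the structure map R → R^𝐝; (ii) det((y^a_{(b)})_{a,b}) = det(Λ) · det((x^a_{(b)})_{a,b}); (iii) if moreover dy^1,…,dy^d is also a basis of Ω^1_{R/K} (equivalently, Λ is invertible over R), then the image of det(y^a_{(b)}) in the localization of R^𝐝 at det(x^a_{(b)}) is a unit, and the localizations of R^𝐝 at det(x^a_{(b)}) and at det(y^a_{(b)}) are isomorphic as R^𝐝-algebras. -/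

import Mathlib

set_option linter.unusedSectionVars false
set_option synthInstance.maxHeartbeats 1000000
set_option maxHeartbeats 1000000


namespace Paper

/-- Multi-indices: finitely supported functions `Fin d → ℕ`. -/
abbrev MIdx (d : ℕ) := Fin d →₀ ℕ

/-- The length `|i|` of a multi-index. -/
def deg {d : ℕ} (i : MIdx d) : ℕ := i.sum fun _ n => n

variable (K R : Type) [Field K] [CharZero K] [CommRing R] [Algebra K R]

/-- The defining relations of the algebra `R^𝐝`. -/
def relSet (d : ℕ) : Set (MvPolynomial (R × MIdx d) R) :=
  {p | (∃ f g : R, ∃ i : MIdx d,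
          p = MvPolynomial.X (f + g, i) - MvPolynomial.X (f, i) - MvPolynomial.X (g, i)) ∨
       (∃ f g : R, ∃ i : MIdx d,
          p = MvPolynomial.X (f * g, i) -
            ∑ q ∈ Finset.HasAntidiagonal.antidiagonal i, MvPolynomial.X (f, q.1) * MvPolynomial.X (g, q.2)) ∨
       (∃ f : R, p = MvPolynomial.X (f, (0 : MIdx d)) - MvPolynomial.C f) ∨
       (∃ (c : K) (i : MIdx d), 1 ≤ deg i ∧ p = MvPolynomial.X (algebraMap K R c, i))}

/-- The commutative `R`-algebra `R^𝐝` generated by the symbols `f_i`. -/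
def Rd (d : ℕ) : Type :=
  MvPolynomial (R × MIdx d) R ⧸ Ideal.span (relSet K R d)

noncomputable instance (d : ℕ) : CommRing (Rd K R d) := Ideal.Quotient.commRing _
noncomputable instance (d : ℕ) : Algebra R (Rd K R d) := Ideal.Quotient.algebra R
noncomputable instance (d : ℕ) : Algebra K (Rd K R d) := Ideal.Quotient.algebra K

/-- The generator `f_i` of `R^𝐝`. -/
noncomputable def gen {d : ℕ} (f : R) (i : MIdx d) : Rd K R d :=
  Ideal.Quotient.mk (Ideal.span (relSet K R d)) (MvPolynomial.X (f, i))

/-- The Taylor series `I(f) = Σ_i f_i t^i ∈ R^𝐝[[t^1,…,t^d]]`. -/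
noncomputable def Ifun {d : ℕ} (f : R) : MvPowerSeries (Fin d) (Rd K R d) :=
  fun i => gen K R f i

end Paper

section PaperAux

variable (K R : Type) [Field K] [CharZero K] [CommRing R] [Algebra K R] {d : ℕ}

open Paper

lemma mk_rel {p : MvPolynomial (R × MIdx d) R} (hp : p ∈ relSet K R d) :
    Ideal.Quotient.mk (Ideal.span (relSet K R d)) p = 0 :=
  Ideal.Quotient.eq_zero_iff_mem.2 (Ideal.subset_span hp)

lemma gen_add (f g : R) (i : MIdx d) :
    gen K R (f + g) i = gen K R f i + gen K R g i := by
  have := mk_rel K R (d := d) (p := MvPolynomial.X (f + g, i) -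
    MvPolynomial.X (f, i) - MvPolynomial.X (g, i)) (Or.inl ⟨f, g, i, rfl⟩)
  rw [RingHom.map_sub, RingHom.map_sub] at this
  unfold gen
  rw [sub_sub, sub_eq_zero] at this
  exact this

lemma gen_mul (f g : R) (i : MIdx d) :
    gen K R (f * g) i = ∑ q ∈ Finset.HasAntidiagonal.antidiagonal i, gen K R f q.1 * gen K R g q.2 := by
  have := mk_rel K R (d := d) (p := MvPolynomial.X (f * g, i) -
    ∑ q ∈ Finset.HasAntidiagonal.antidiagonal i, MvPolynomial.X (f, q.1) * MvPolynomial.X (g, q.2))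
    (Or.inr (Or.inl ⟨f, g, i, rfl⟩))
  rw [RingHom.map_sub, map_sum (Ideal.Quotient.mk (Ideal.span (relSet K R d)))] at this
  simp only [RingHom.map_mul] at this
  unfold gen
  rw [sub_eq_zero] at this
  exact this

lemma algebraMap_Rd (f : R) :
    algebraMap R (Rd K R d) f =
      Ideal.Quotient.mk (Ideal.span (relSet K R d)) (MvPolynomial.C f) := rfl

lemma gen_zero (f : R) : gen K R f (0 : MIdx d) = algebraMap R (Rd K R d) f := by
  have := mk_rel K R (d := d) (p := MvPolynomial.X (f, (0 : MIdx d)) - MvPolynomial.C f)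
    (Or.inr (Or.inr (Or.inl ⟨f, rfl⟩)))
  rw [RingHom.map_sub] at this
  rw [algebraMap_Rd]
  unfold gen
  linear_combination this

lemma gen_const (c : K) (i : MIdx d) (hi : 1 ≤ deg i) :
    gen K R (algebraMap K R c) i = 0 :=
  mk_rel K R (Or.inr (Or.inr (Or.inr ⟨c, i, hi, rfl⟩)))

lemma deg_single (c : Fin d) : deg (Finsupp.single c 1 : MIdx d) = 1 := by
  simp [deg, Finsupp.sum_single_index]

lemma gen_mul_single (f g : R) (c : Fin d) :
    gen K R (f * g) (Finsupp.single c 1) =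
      algebraMap R (Rd K R d) f * gen K R g (Finsupp.single c 1) +
      gen K R f (Finsupp.single c 1) * algebraMap R (Rd K R d) g := by
  have h1 : (Finset.HasAntidiagonal.antidiagonal (1 : ℕ)) = {(0, 1), (1, 0)} := by decide
  rw [gen_mul, Finsupp.antidiagonal_single, Finset.sum_map, h1,
    Finset.sum_insert (by decide), Finset.sum_singleton]
  simp only [Function.Embedding.coe_prodMap, Function.Embedding.coeFn_mk, Prod.map_apply,
    Finsupp.single_zero, gen_zero]

instance : IsScalarTower K R (Rd K R d) :=
  IsScalarTower.of_algebraMap_eq fun c => rfl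

/-- The derivation `f ↦ f_{(c)}`. -/
noncomputable def Dc (c : Fin d) : Derivation K R (Rd K R d) where
  toFun f := gen K R f (Finsupp.single c 1)
  map_add' f g := gen_add K R f g _
  map_one_eq_zero' := by
    have := gen_const K R (1 : K) (Finsupp.single c 1) (le_of_eq (deg_single c).symm)
    rw [map_one] at this
    exact this
  map_smul' k f := by
    simp only [RingHom.id_apply]
    rw [Algebra.smul_def k f, gen_mul_single, gen_const K R k _ (le_of_eq (deg_single c).symm),
      zero_mul, add_zero, Algebra.smul_def, IsScalarTower.algebraMap_apply K R (Rd K R d)]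
  leibniz' f g := by
    show gen K R (f * g) (Finsupp.single c 1) =
      f • gen K R g (Finsupp.single c 1) + g • gen K R f (Finsupp.single c 1)
    rw [gen_mul_single, Algebra.smul_def, Algebra.smul_def]
    ring

lemma Dc_apply (c : Fin d) (f : R) : Dc K R c f = gen K R f (Finsupp.single c 1) := rfl

lemma Dc_eq (c : Fin d) (f : R) :
    gen K R f (Finsupp.single c 1) =
      (Derivation.liftKaehlerDifferential
        (show Derivation K R (MvPolynomial (R × MIdx d) R ⧸ Ideal.span (relSet K R d)) from Dc K R c))
        (KaehlerDifferential.D K R f) := by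
  rw [Derivation.liftKaehlerDifferential_comp_D]; rfl

end PaperAux

/-- Change of parameters: `y^a_{(b)} = Σ_c Λ^a_c x^c_{(b)}`,
`det(y^a_{(b)}) = det(Λ)·det(x^a_{(b)})`, and if `Λ` is invertible then the image
of `det(y^a_{(b)})` in the localization of `R^𝐝` at `det(x^a_{(b)})` is a unit, and
the two localizations are isomorphic as `R^𝐝`-algebras. -/
theorem statement2 (K R : Type) [Field K] [CharZero K] [CommRing R] [Algebra K R]
    (d : ℕ) (hd : 1 ≤ d) (x : Fin d → R)
    (b : Module.Basis (Fin d) R (KaehlerDifferential K R))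
    (hb : ∀ a : Fin d, b a = KaehlerDifferential.D K R (x a))
    (y : Fin d → R) (Λ : Matrix (Fin d) (Fin d) R)
    (hΛ : ∀ a : Fin d, KaehlerDifferential.D K R (y a) =
      ∑ c : Fin d, Λ a c • KaehlerDifferential.D K R (x c)) :
    (∀ a c : Fin d, Paper.gen K R (y a) (Finsupp.single c 1) =
        ∑ e : Fin d, algebraMap R (Paper.Rd K R d) (Λ a e) *
          Paper.gen K R (x e) (Finsupp.single c 1)) ∧
    (Matrix.det (Matrix.of fun a c => Paper.gen K R (y a) (Finsupp.single c 1)) =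
        algebraMap R (Paper.Rd K R d) Λ.det *
          Matrix.det (Matrix.of fun a c => Paper.gen K R (x a) (Finsupp.single c 1))) ∧
    (IsUnit Λ.det →
      IsUnit (algebraMap (Paper.Rd K R d)
          (Localization.Away
            (Matrix.det (Matrix.of fun a c => Paper.gen K R (x a) (Finsupp.single c 1))))
          (Matrix.det (Matrix.of fun a c => Paper.gen K R (y a) (Finsupp.single c 1)))) ∧
      Nonempty
        ((Localization.Away
            (Matrix.det (Matrix.of fun a c => Paper.gen K R (x a) (Finsupp.single c 1)))) ≃ₐ[Paper.Rd K R d]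
         (Localization.Away
            (Matrix.det (Matrix.of fun a c => Paper.gen K R (y a) (Finsupp.single c 1)))))) := by
  classical
  have part1 : ∀ a c : Fin d, Paper.gen K R (y a) (Finsupp.single c 1) =
      ∑ e : Fin d, algebraMap R (Paper.Rd K R d) (Λ a e) *
        Paper.gen K R (x e) (Finsupp.single c 1) := by
    intro a c
    rw [Dc_eq K R c (y a), hΛ a, map_sum]
    refine Finset.sum_congr rfl fun e _ => ?_
    rw [LinearMap.map_smul, ← Dc_eq K R c (x e)]; exact Algebra.smul_def _ _
  have hmat : (Matrix.of fun a c => Paper.gen K R (y a) (Finsupp.single c 1)) =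
      (Λ.map (algebraMap R (Paper.Rd K R d))) *
        (Matrix.of fun a c => Paper.gen K R (x a) (Finsupp.single c 1)) := by
    ext a c
    rw [Matrix.mul_apply]
    simpa [Matrix.map_apply] using part1 a c
  have part2 : Matrix.det (Matrix.of fun a c => Paper.gen K R (y a) (Finsupp.single c 1)) =
      algebraMap R (Paper.Rd K R d) Λ.det *
        Matrix.det (Matrix.of fun a c => Paper.gen K R (x a) (Finsupp.single c 1)) := by
    rw [hmat, Matrix.det_mul, RingHom.map_det, RingHom.mapMatrix_apply]
  refine ⟨part1, part2, fun hU => ?_⟩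
  set dx := Matrix.det (Matrix.of fun a c => Paper.gen K R (x a) (Finsupp.single c 1)) with hdx
  set dy := Matrix.det (Matrix.of fun a c => Paper.gen K R (y a) (Finsupp.single c 1)) with hdy
  have hu : IsUnit (algebraMap R (Paper.Rd K R d) Λ.det) := hU.map _
  have hassoc : Associated dx dy := ⟨hu.unit, by rw [IsUnit.unit_spec, part2, mul_comm]⟩
  constructor
  · rw [part2, map_mul]
    exact (hu.map _).mul (IsLocalization.Away.algebraMap_isUnit dx)
  · haveI : IsLocalization.Away dy (Localization.Away dx) :=
      IsLocalization.Away.of_associated hassoc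
    exact ⟨IsLocalization.algEquiv (Submonoid.powers dy) (Localization.Away dx)
      (Localization.Away dy)⟩
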